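/- Let C > 0, ε > 0, let M be a metric space, and let {U_j}_{j=1}^{N} be a finite open covering of M by proper open subsets such that (i) for every p ∈ M the open ball B(p,ε) is contained in some U_j, and (ii) for each j, the number of indices i with U_i ∩ U_j ≠ ∅ is at most C. Define f_j(x) := dist(x, M ∖ U_j), ξ_j(x) := f_j(x)/Σ_{i=1}^{N} f_i(x), and Θ : M → ℝ^N (with the Euclidean norm) by Θ(x) := Σ_{j=1}^{N} ξ_j(x) · ε e_j, where e_j is the j-th standard basis vector. Then there exists a constant C̃ depending only on C such that Θ is C̃-Lipschitz. -/
import Mathlib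


open Metric Set

/-- **Claim.** Let `C, ε > 0` and let `{U_j}_{j=1}^N` be a finite open covering of a metric
space `M` by proper open subsets such that every `ε`-ball is contained in some `U_j` and
each `U_j` meets at most `C` of the `U_i`.  With `f_j(x) = dist(x, M ∖ U_j)`,
`ξ_j = f_j / ∑ᵢ f_i`, and `Θ(x) = ∑_j ξ_j(x) • (ε e_j) ∈ ℝ^N` (Euclidean norm),
there is a constant `C̃` depending only on `C` such that `Θ` is `C̃`-Lipschitz. -/
theorem theta_is_lipschitz :
    ∀ C : ℝ, 0 < C → ∃ Ct : ℝ, 0 < Ct ∧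
      ∀ (ε : ℝ), 0 < ε →
      ∀ (M : Type*) [MetricSpace M] (N : ℕ) (U : Fin N → Set M),
        (∀ j, IsOpen (U j)) →
        (∀ j, U j ≠ Set.univ) →
        ((⋃ j, U j) = Set.univ) →
        (∀ p : M, ∃ j, ball p ε ⊆ U j) →
        (∀ j, (({i | (U i ∩ U j).Nonempty}.ncard : ℝ) ≤ C)) →
        ∀ x y : M,
          dist
            (∑ j, (infDist x (U j)ᶜ / ∑ i, infDist x (U i)ᶜ) •
              (ε • EuclideanSpace.single j (1 : ℝ)))
            (∑ j, (infDist y (U j)ᶜ / ∑ i, infDist y (U i)ᶜ) •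
              (ε • EuclideanSpace.single j (1 : ℝ)))
            ≤ Ct * dist x y := by
  intro C hC
  refine ⟨4 * C, by positivity, ?_⟩
  intro ε hε M _ N U hUopen hUne hUcov hball hcard x y
  classical
  set f : Fin N → M → ℝ := fun j z => infDist z (U j)ᶜ with hfdef
  set S : M → ℝ := fun z => ∑ i, f i z with hSdef
  have hne : ∀ j, ((U j)ᶜ : Set M).Nonempty := fun j => by
    rw [nonempty_compl]; exact hUne j
  have hf0 : ∀ j z, 0 ≤ f j z := fun j z => infDist_nonneg
  have hSle : ∀ z : M, ε ≤ S z := by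
    intro z
    obtain ⟨j, hj⟩ := hball z
    have h1 : ε ≤ f j z := by
      by_contra h
      push_neg at h
      obtain ⟨w, hw, hwd⟩ := (infDist_lt_iff (hne j)).mp h
      exact hw (hj (by rwa [mem_ball, dist_comm]))
    exact h1.trans (Finset.single_le_sum (fun i _ => hf0 i z) (Finset.mem_univ j))
  have hSpos : ∀ z, 0 < S z := fun z => lt_of_lt_of_le hε (hSle z)
  have hLip : ∀ (j : Fin N) (z w : M), |f j z - f j w| ≤ dist z w := by
    intro j z w
    rw [abs_sub_le_iff]
    constructor
    · have := infDist_le_infDist_add_dist (x := z) (y := w) (s := (U j)ᶜ)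
      linarith
    · have := infDist_le_infDist_add_dist (x := w) (y := z) (s := (U j)ᶜ)
      rw [dist_comm] at this; linarith
  have hmem : ∀ (j : Fin N) (z : M), f j z ≠ 0 → z ∈ U j := by
    intro j z h
    by_contra hz
    exact h (infDist_zero_of_mem hz)
  -- cardinality of the support
  have hTcard : ∀ z : M,
      (((Finset.univ.filter (fun j => f j z ≠ 0)).card : ℝ)) ≤ C := by
    intro z
    obtain ⟨j0, hj0⟩ := hball z
    have hzj0 : z ∈ U j0 := hj0 (mem_ball_self hε)
    have hsub : Finset.univ.filter (fun j => f j z ≠ 0) ⊆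
        Finset.univ.filter (fun i => (U i ∩ U j0).Nonempty) := by
      intro j hj
      simp only [Finset.mem_filter, Finset.mem_univ, true_and] at *
      exact ⟨z, hmem j z hj, hzj0⟩
    have heq : {i | (U i ∩ U j0).Nonempty}.ncard =
        (Finset.univ.filter (fun i => (U i ∩ U j0).Nonempty)).card := by
      rw [Set.ncard_eq_toFinset_card']
      congr 1
      ext i
      simp
    have h1 : ((Finset.univ.filter (fun j => f j z ≠ 0)).card : ℝ) ≤
        ((Finset.univ.filter (fun i => (U i ∩ U j0).Nonempty)).card : ℝ) := by
      exact_mod_cast Finset.card_le_card hsub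
    have h2 := hcard j0
    rw [heq] at h2
    linarith
  -- sum of increments
  have hsum : ∀ z w : M, ∑ j, |f j z - f j w| ≤ 2 * C * dist z w := by
    intro z w
    set s : Finset (Fin N) :=
      Finset.univ.filter (fun j => f j z ≠ 0) ∪ Finset.univ.filter (fun j => f j w ≠ 0) with hs
    have h1 : ∑ j, |f j z - f j w| = ∑ j ∈ s, |f j z - f j w| := by
      refine (Finset.sum_subset (Finset.subset_univ s) ?_).symm
      intro j _ hj
      simp only [hs, Finset.mem_union, Finset.mem_filter, Finset.mem_univ, true_and,
        not_or, not_not] at hj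
      rw [hj.1, hj.2, sub_zero, abs_zero]
    have h2 : ∑ j ∈ s, |f j z - f j w| ≤ s.card • dist z w :=
      Finset.sum_le_card_nsmul s _ _ (fun j _ => hLip j z w)
    have h3 : (s.card : ℝ) ≤ 2 * C := by
      have := Finset.card_union_le (Finset.univ.filter (fun j => f j z ≠ 0))
        (Finset.univ.filter (fun j => f j w ≠ 0))
      have hz := hTcard z
      have hw := hTcard w
      have : (s.card : ℝ) ≤ ((Finset.univ.filter (fun j => f j z ≠ 0)).card : ℝ) +
          ((Finset.univ.filter (fun j => f j w ≠ 0)).card : ℝ) := by exact_mod_cast this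
      linarith
    rw [h1]
    calc ∑ j ∈ s, |f j z - f j w| ≤ s.card • dist z w := h2
      _ = (s.card : ℝ) * dist z w := by rw [nsmul_eq_mul]
      _ ≤ 2 * C * dist z w := by
          exact mul_le_mul_of_nonneg_right h3 dist_nonneg
  have hSdiff : |S x - S y| ≤ 2 * C * dist x y := by
    have : |S x - S y| ≤ ∑ j, |f j x - f j y| := by
      rw [hSdef]
      simp only [← Finset.sum_sub_distrib]
      exact Finset.abs_sum_le_sum_abs _ _
    exact this.trans (hsum x y)
  -- per-term bound for the normalized functions
  have hterm : ∀ j : Fin N, |f j x / S x - f j y / S y| ≤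
      |f j x - f j y| / S x + (f j y / S y) * (|S x - S y| / S x) := by
    intro j
    have hSx := hSpos x
    have hSy := hSpos y
    have heq : f j x / S x - f j y / S y =
        (f j x - f j y) / S x + (f j y / S y) * ((S y - S x) / S x) := by
      field_simp
      ring
    rw [heq]
    refine (abs_add_le _ _).trans ?_
    have e1 : |(f j x - f j y) / S x| = |f j x - f j y| / S x := by
      rw [abs_div, abs_of_pos hSx]
    have e2 : |(f j y / S y) * ((S y - S x) / S x)| =
        (f j y / S y) * (|S x - S y| / S x) := by
      rw [abs_mul, abs_div, abs_div, abs_of_pos hSx, abs_of_pos hSy,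
        abs_of_nonneg (hf0 j y), abs_sub_comm]
    rw [e1, e2]
  have hxisum : ∑ j, |f j x / S x - f j y / S y| ≤ 4 * C * dist x y / ε := by
    have hSx := hSpos x
    have hSy := hSpos y
    have h1 : ∑ j, |f j x / S x - f j y / S y| ≤
        (∑ j, |f j x - f j y|) / S x + |S x - S y| / S x := by
      calc ∑ j, |f j x / S x - f j y / S y|
          ≤ ∑ j, (|f j x - f j y| / S x + (f j y / S y) * (|S x - S y| / S x)) :=
            Finset.sum_le_sum (fun j _ => hterm j)
        _ = (∑ j, |f j x - f j y|) / S x + (∑ j, f j y / S y) * (|S x - S y| / S x) := by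
            rw [Finset.sum_add_distrib, ← Finset.sum_div, ← Finset.sum_mul]
        _ = (∑ j, |f j x - f j y|) / S x + |S x - S y| / S x := by
            rw [← Finset.sum_div]
            rw [show (∑ j, f j y) = S y from rfl, div_self hSy.ne', one_mul]
    have h2 : (∑ j, |f j x - f j y|) / S x ≤ 2 * C * dist x y / ε := by
      apply div_le_div₀ (by positivity) (hsum x y) hε (hSle x)
    have h3 : |S x - S y| / S x ≤ 2 * C * dist x y / ε :=
      div_le_div₀ (by positivity) hSdiff hε (hSle x)
    calc ∑ j, |f j x / S x - f j y / S y|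
        ≤ (∑ j, |f j x - f j y|) / S x + |S x - S y| / S x := h1
      _ ≤ 2 * C * dist x y / ε + 2 * C * dist x y / ε := add_le_add h2 h3
      _ = 4 * C * dist x y / ε := by ring
  -- conclude
  have hdist : dist
      (∑ j, (f j x / S x) • (ε • EuclideanSpace.single j (1 : ℝ)))
      (∑ j, (f j y / S y) • (ε • EuclideanSpace.single j (1 : ℝ)))
      ≤ ε * ∑ j, |f j x / S x - f j y / S y| := by
    rw [dist_eq_norm, ← Finset.sum_sub_distrib]
    have heq : ∀ j : Fin N,
        (f j x / S x) • (ε • EuclideanSpace.single j (1 : ℝ)) -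
        (f j y / S y) • (ε • EuclideanSpace.single j (1 : ℝ)) =
        (f j x / S x - f j y / S y) • (ε • EuclideanSpace.single j (1 : ℝ)) := by
      intro j
      rw [sub_smul]
    calc ‖∑ j, ((f j x / S x) • (ε • EuclideanSpace.single j (1 : ℝ)) -
          (f j y / S y) • (ε • EuclideanSpace.single j (1 : ℝ)))‖
        ≤ ∑ j, ‖(f j x / S x) • (ε • EuclideanSpace.single j (1 : ℝ)) -
          (f j y / S y) • (ε • EuclideanSpace.single j (1 : ℝ))‖ := norm_sum_le _ _
      _ = ∑ j, |f j x / S x - f j y / S y| * ε := by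
          refine Finset.sum_congr rfl (fun j _ => ?_)
          rw [heq j, norm_smul, norm_smul, EuclideanSpace.norm_single]
          simp [Real.norm_eq_abs, abs_of_pos hε]
      _ = ε * ∑ j, |f j x / S x - f j y / S y| := by
          rw [Finset.mul_sum]; exact Finset.sum_congr rfl (fun j _ => mul_comm _ _)
  refine hdist.trans ?_
  have h5 : ε * (4 * C * dist x y / ε) = 4 * C * dist x y := by field_simp
  linarith [mul_le_mul_of_nonneg_left hxisum hε.le]
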